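/- Let p(t) = sum_{i=0}^{2m} b_i t^i with real coefficients satisfying b_0 = b_{2m} = 1, b_1 = b_{2m-1} = 0, and m ≥ 4. Then in q(t) = (1/2) p(t)^2 + (1/2) p(t^2) − (1 + t^{2m}) p(t), the coefficients of t^{4m}, t^{4m-1}, t^{4m-2}, t^{4m-3} all vanish, and the coefficient of t^{4m-4} equals b_{2m-2}^2/2 + b_{2m-2}/2. -/

import Mathlib

open Polynomial Finset

lemma mul_coeff_near_top (f g : Polynomial ℝ) (d k : ℕ) (hf : f.natDegree ≤ d)
    (hg : g.natDegree ≤ d) (hk : k ≤ d) :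
    (f * g).coeff (2 * d - k) = ∑ j ∈ range (k+1), f.coeff (d - j) * g.coeff (d - k + j) := by
  rw [Polynomial.coeff_mul]
  rw [← Finset.sum_image (s := range (k+1)) (f := fun x : ℕ × ℕ => f.coeff x.1 * g.coeff x.2)
      (g := fun j => ((d - j : ℕ), (d - k + j : ℕ))) ?inj]
  case inj =>
    intro a ha b hb hab
    simp only [coe_range, Set.mem_Iio] at ha hb
    simp only [Prod.mk.injEq] at hab
    omega
  symm
  apply Finset.sum_subset
  · intro x hx
    simp only [mem_image, mem_range] at hx
    obtain ⟨j, hj, rfl⟩ := hx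
    simp only [Finset.HasAntidiagonal.mem_antidiagonal]
    omega
  · intro x hx hnx
    simp only [Finset.HasAntidiagonal.mem_antidiagonal] at hx
    simp only [mem_image, mem_range, not_exists, not_and] at hnx
    rcases lt_or_ge d x.1 with h | h
    · rw [Polynomial.coeff_eq_zero_of_natDegree_lt (lt_of_le_of_lt hf h), zero_mul]
    · rcases lt_or_ge x.1 (d - k) with h2 | h2
      · rw [Polynomial.coeff_eq_zero_of_natDegree_lt (lt_of_le_of_lt hg (by omega)), mul_zero]
      · exfalso
        obtain ⟨a, b⟩ := x
        exact hnx (d - a) (by omega) (by simp only [Prod.mk.injEq]; omega)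

theorem stmt_3 (m : ℕ) (hm : 4 ≤ m) (p : Polynomial ℝ)
    (hdeg : p.natDegree ≤ 2 * m)
    (hb0 : p.coeff 0 = 1) (htop : p.coeff (2 * m) = 1)
    (hb1 : p.coeff 1 = 0) (hb2m1 : p.coeff (2 * m - 1) = 0) :
    let q := C (1/2 : ℝ) * p ^ 2 + C (1/2 : ℝ) * p.comp (X ^ 2)
      - (1 + X ^ (2 * m)) * p
    q.coeff (4 * m) = 0 ∧ q.coeff (4 * m - 1) = 0 ∧
    q.coeff (4 * m - 2) = 0 ∧ q.coeff (4 * m - 3) = 0 ∧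
    q.coeff (4 * m - 4) = (p.coeff (2 * m - 2)) ^ 2 / 2 + (p.coeff (2 * m - 2)) / 2 := by
  intro q
  have hcomp : p.comp (X ^ 2) = expand ℝ 2 p := (expand_eq_comp_X_pow 2).symm
  have hsq : ∀ k, k ≤ 2 * m → (p ^ 2).coeff (2 * (2 * m) - k)
      = ∑ j ∈ range (k+1), p.coeff (2 * m - j) * p.coeff (2 * m - k + j) := by
    intro k hk
    rw [sq]
    exact mul_coeff_near_top p p (2 * m) k hdeg hdeg hk
  -- coefficient of q at index 4m - k for k ≤ 4
  have key : ∀ k, k ≤ 4 → q.coeff (4 * m - k)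
      = (1/2) * ∑ j ∈ range (k+1), p.coeff (2 * m - j) * p.coeff (2 * m - k + j)
        + (1/2) * (expand ℝ 2 p).coeff (4 * m - k)
        - p.coeff (4 * m - k) - p.coeff (2 * m - k) := by
    intro k hk
    have h1 : 4 * m - k = 2 * (2 * m) - k := by ring_nf
    have h2 : 4 * m - k = (2 * m - k) + 2 * m := by omega
    show (C (1/2 : ℝ) * p ^ 2 + C (1/2 : ℝ) * p.comp (X ^ 2)
      - (1 + X ^ (2 * m)) * p).coeff (4 * m - k) = _
    rw [coeff_sub, coeff_add, coeff_C_mul, coeff_C_mul, hcomp, add_mul, one_mul, coeff_add,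
      h2, coeff_X_pow_mul, ← h2, h1, hsq k (by omega)]
    ring
  have hz : ∀ n, 2 * m < n → p.coeff n = 0 := fun n hn =>
    Polynomial.coeff_eq_zero_of_natDegree_lt (lt_of_le_of_lt hdeg hn)
  have hex : ∀ n, (expand ℝ 2 p).coeff n = if 2 ∣ n then p.coeff (n / 2) else 0 := by
    intro n; rw [Polynomial.coeff_expand (by norm_num)]
  refine ⟨?_, ?_, ?_, ?_, ?_⟩
  · rw [show 4 * m = 4 * m - 0 by omega, key 0 (by omega)]
    rw [hex]
    rw [show (4 * m - 0) / 2 = 2 * m by omega]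
    simp only [if_pos (by omega : 2 ∣ 4 * m - 0)]
    rw [hz (4 * m - 0) (by omega)]
    simp [htop]
    norm_num
  · rw [key 1 (by omega), hex]
    rw [if_neg (by omega : ¬ 2 ∣ 4 * m - 1)]
    rw [hz (4 * m - 1) (by omega)]
    simp [Finset.sum_range_succ, htop, hb2m1, show 2 * m - 1 + 1 = 2 * m by omega]
  · rw [key 2 (by omega), hex]
    rw [if_pos (by omega : 2 ∣ 4 * m - 2), show (4 * m - 2) / 2 = 2 * m - 1 by omega]
    rw [hz (4 * m - 2) (by omega)]
    simp [Finset.sum_range_succ, htop, hb2m1, show 2 * m - 2 + 1 = 2 * m - 1 by omega,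
      show 2 * m - 2 + 2 = 2 * m by omega]
    ring
  · rw [key 3 (by omega), hex]
    rw [if_neg (by omega : ¬ 2 ∣ 4 * m - 3)]
    rw [hz (4 * m - 3) (by omega)]
    simp [Finset.sum_range_succ, htop, hb2m1, show 2 * m - 3 + 1 = 2 * m - 2 by omega,
      show 2 * m - 3 + 2 = 2 * m - 1 by omega, show 2 * m - 3 + 3 = 2 * m by omega]
    ring
  · rw [key 4 (by omega), hex]
    rw [if_pos (by omega : 2 ∣ 4 * m - 4), show (4 * m - 4) / 2 = 2 * m - 2 by omega]
    rw [hz (4 * m - 4) (by omega)]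
    simp [Finset.sum_range_succ, htop, hb2m1, show 2 * m - 4 + 1 = 2 * m - 3 by omega,
      show 2 * m - 4 + 2 = 2 * m - 2 by omega, show 2 * m - 4 + 3 = 2 * m - 1 by omega,
      show 2 * m - 4 + 4 = 2 * m by omega]
    ring
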